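/- The function g(Ω) = 2 − e^{2/Ω}·E₁(2/Ω)/(e^{1/Ω}·E₁(1/Ω)) is strictly decreasing on (0, ∞), i.e., the throughput gain ratio τ_max/τ_conv,2 of buffer-aided relaying with adaptive link selection over conventional buffer-aided relaying for symmetric Rayleigh links monotonically increases as the mean SNR Ω decreases. -/

import Mathlib

open Real MeasureTheory Set Filter Topology

/-- The exponential integral function `E₁(x) = ∫_x^∞ e^{-t}/t dt`. -/
noncomputable def expIntE1 (x : ℝ) : ℝ := ∫ t in Set.Ioi x, Real.exp (-t) / t

namespace GainRatioAux


lemma integrableOn_E1 {x : ℝ} (hx : 0 < x) :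
    IntegrableOn (fun t => Real.exp (-t) / t) (Set.Ioi x) := by
  have hmaj : IntegrableOn (fun t : ℝ => x⁻¹ * Real.exp (-1 * t)) (Set.Ioi x) :=
    (exp_neg_integrableOn_Ioi x one_pos).const_mul _
  refine Integrable.mono hmaj ?_ ?_
  · exact (((continuous_exp.comp continuous_neg).continuousOn).div continuousOn_id
      (fun t ht => ne_of_gt (lt_trans hx ht))).aestronglyMeasurable measurableSet_Ioi
  · filter_upwards [ae_restrict_mem measurableSet_Ioi] with t ht
    have htx : x < t := ht
    have ht0 : 0 < t := hx.trans htx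
    rw [Real.norm_eq_abs, Real.norm_eq_abs, abs_of_nonneg (by positivity),
      abs_of_nonneg (by positivity), div_eq_mul_inv, mul_comm, neg_one_mul]
    exact mul_le_mul_of_nonneg_right (inv_anti₀ hx htx.le) (exp_pos _).le

lemma integrableOn_aux {x : ℝ} (hx : 0 < x) (n : ℕ) :
    IntegrableOn (fun s => Real.exp (-s) / (s + x) ^ n) (Set.Ioi 0) := by
  have hmaj : IntegrableOn (fun s : ℝ => (x ^ n)⁻¹ * Real.exp (-1 * s)) (Set.Ioi 0) :=
    (exp_neg_integrableOn_Ioi 0 one_pos).const_mul _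
  refine Integrable.mono hmaj ?_ ?_
  · refine (((continuous_exp.comp continuous_neg).continuousOn).div
      (((continuous_add_right x).pow n).continuousOn) (fun s hs => ?_)).aestronglyMeasurable
      measurableSet_Ioi
    have : (0:ℝ) < s + x := by linarith [mem_Ioi.mp hs]
    exact pow_ne_zero _ this.ne'
  · filter_upwards [ae_restrict_mem measurableSet_Ioi] with s hs
    have hs0 : (0:ℝ) < s := hs
    have hsx : (0:ℝ) < s + x := by linarith
    rw [Real.norm_eq_abs, Real.norm_eq_abs, abs_of_nonneg (by positivity),
      abs_of_nonneg (by positivity), neg_one_mul, div_eq_mul_inv, mul_comm]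
    exact mul_le_mul_of_nonneg_right
      (inv_anti₀ (by positivity) (pow_le_pow_left₀ hx.le (by linarith) n)) (exp_pos _).le

lemma integrableOn_one {x : ℝ} (hx : 0 < x) :
    IntegrableOn (fun s => Real.exp (-s) / (s + x)) (Set.Ioi 0) := by
  simpa using integrableOn_aux hx 1

/-- Shift identity: `e^x E₁(x) = ∫_0^∞ e^{-s}/(s+x) ds`. -/
lemma shift_eq (x : ℝ) :
    Real.exp x * expIntE1 x = ∫ s in Set.Ioi (0:ℝ), Real.exp (-s) / (s + x) := by
  unfold expIntE1
  have h : ∫ t in Set.Ioi x, Real.exp (-t) / t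
      = ∫ s in Set.Ioi (0:ℝ), Real.exp (-(s + x)) / (s + x) := by
    have h := (measurePreserving_add_right (volume : Measure ℝ) x).setIntegral_preimage_emb
      (measurableEmbedding_addRight x) (fun t => Real.exp (-t) / t) (Set.Ioi x)
    rw [← h]; congr 1; ext s; simp [Set.mem_preimage, lt_sub_iff_add_lt]
  rw [h, ← integral_const_mul]
  congr 1; ext s
  rw [neg_add, Real.exp_add, ← mul_div_assoc, ← Real.exp_add]
  rw [← Real.exp_add]
  ring_nf

/-- `∫_0^∞ e^{-s}/(s+x)² ds = 1/x − e^x E₁(x)`. -/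
lemma integral_sq {x : ℝ} (hx : 0 < x) :
    ∫ s in Set.Ioi (0:ℝ), Real.exp (-s) / (s + x) ^ 2
      = 1 / x - Real.exp x * expIntE1 x := by
  have hderiv : ∀ s ∈ Set.Ioi (0:ℝ),
      HasDerivAt (fun s : ℝ => -(Real.exp (-s) / (s + x)))
        (Real.exp (-s) / (s + x) + Real.exp (-s) / (s + x) ^ 2) s := by
    intro s hs
    have hs0 : (0:ℝ) < s := hs
    have hsx : s + x ≠ 0 := by positivity
    have h1 : HasDerivAt (fun s : ℝ => Real.exp (-s)) (-Real.exp (-s)) s := by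
      simpa using (hasDerivAt_neg s).exp
    have h2 : HasDerivAt (fun s : ℝ => s + x) 1 s := (hasDerivAt_id s).add_const x
    have := (h1.div h2 hsx).neg
    refine this.congr_deriv ?_
    field_simp
    ring
  have hcont : ContinuousWithinAt (fun s : ℝ => -(Real.exp (-s) / (s + x)))
      (Set.Ici 0) 0 := by
    refine ContinuousAt.continuousWithinAt ?_
    have : ContinuousAt (fun s : ℝ => s + x) 0 := by fun_prop
    exact (((continuous_exp.comp continuous_neg).continuousAt).div this (by simpa using hx.ne')).neg
  have hint : IntegrableOn
      (fun s => Real.exp (-s) / (s + x) + Real.exp (-s) / (s + x) ^ 2) (Set.Ioi 0) :=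
    (integrableOn_one hx).add (integrableOn_aux hx 2)
  have htend : Tendsto (fun s : ℝ => -(Real.exp (-s) / (s + x))) atTop (nhds 0) := by
    have h1 : Tendsto (fun s : ℝ => Real.exp (-s)) atTop (nhds 0) :=
      Real.tendsto_exp_neg_atTop_nhds_zero
    have h2 : Tendsto (fun s : ℝ => (s + x)⁻¹) atTop (nhds 0) :=
      (tendsto_inv_atTop_zero).comp (tendsto_atTop_add_const_right _ x tendsto_id)
    simpa [div_eq_mul_inv] using (h1.mul h2).neg
  have key := integral_Ioi_of_hasDerivAt_of_tendsto hcont hderiv hint htend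
  rw [integral_add (integrableOn_one hx) (integrableOn_aux hx 2)] at key
  have : (0:ℝ) - -(Real.exp (-0) / (0 + x)) = 1 / x := by simp [one_div]
  rw [this] at key
  rw [shift_eq]
  linarith

/-- `E₁(x) > 0` for `x > 0`. -/
lemma expIntE1_pos {x : ℝ} (hx : 0 < x) : 0 < expIntE1 x := by
  unfold expIntE1
  have hae : 0 ≤ᵐ[volume.restrict (Set.Ioi x)] fun t => Real.exp (-t) / t := by
    filter_upwards [ae_restrict_mem measurableSet_Ioi] with t ht
    have : 0 < t := hx.trans ht
    positivity
  rw [setIntegral_pos_iff_support_of_nonneg_ae hae (integrableOn_E1 hx)]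
  have hsub : Set.Ioi x ⊆ Function.support (fun t => Real.exp (-t) / t) ∩ Set.Ioi x := by
    intro t ht
    have ht0 : 0 < t := hx.trans ht
    refine ⟨?_, ht⟩
    simp only [Function.mem_support]
    positivity
  calc (0:ENNReal) < volume (Set.Ioi x) := by simp
    _ ≤ _ := measure_mono hsub


/-- Strict Cauchy–Schwarz-type inequality: `F(x)² + F(x) < 1/x` for `F(x) = eˣE₁(x)`. -/
lemma key_ineq {x : ℝ} (hx : 0 < x) :
    (Real.exp x * expIntE1 x) ^ 2 + Real.exp x * expIntE1 x < 1 / x := by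
  set c := Real.exp x * expIntE1 x with hc
  have hcpos : 0 < c := mul_pos (exp_pos x) (expIntE1_pos hx)
  have hint2 := integrableOn_aux hx 2
  have hint1 := integrableOn_one hx
  have hint0 : IntegrableOn (fun s : ℝ => Real.exp (-s)) (Set.Ioi 0) := by
    have := exp_neg_integrableOn_Ioi 0 one_pos
    simpa [neg_one_mul] using this
  have heq : Set.EqOn
      (fun s : ℝ => Real.exp (-s) / (s + x) ^ 2 - 2 * c * (Real.exp (-s) / (s + x))
        + c ^ 2 * Real.exp (-s))
      (fun s : ℝ => Real.exp (-s) * ((s + x)⁻¹ - c) ^ 2) (Set.Ioi 0) := by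
    intro s hs
    have hs0 : (0:ℝ) < s := hs
    have hsx : s + x ≠ 0 := by positivity
    field_simp
    ring
  have hf : IntegrableOn (fun s : ℝ => Real.exp (-s) / (s + x) ^ 2
      - 2 * c * (Real.exp (-s) / (s + x))) (Set.Ioi 0) := hint2.sub (hint1.const_mul _)
  have hsum : IntegrableOn (fun s : ℝ => Real.exp (-s) / (s + x) ^ 2
      - 2 * c * (Real.exp (-s) / (s + x)) + c ^ 2 * Real.exp (-s)) (Set.Ioi 0) :=
    hf.add (hint0.const_mul _)
  have hgint : IntegrableOn (fun s : ℝ => Real.exp (-s) * ((s + x)⁻¹ - c) ^ 2)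
      (Set.Ioi 0) := hsum.congr_fun heq measurableSet_Ioi
  have hgnonneg : 0 ≤ᵐ[volume.restrict (Set.Ioi (0:ℝ))]
      fun s : ℝ => Real.exp (-s) * ((s + x)⁻¹ - c) ^ 2 := by
    filter_upwards with s
    positivity
  have hpos : 0 < ∫ s in Set.Ioi (0:ℝ), Real.exp (-s) * ((s + x)⁻¹ - c) ^ 2 := by
    rw [setIntegral_pos_iff_support_of_nonneg_ae hgnonneg hgint]
    have hsub : Set.Ioi 0 \ {c⁻¹ - x} ⊆
        Function.support (fun s : ℝ => Real.exp (-s) * ((s + x)⁻¹ - c) ^ 2) ∩ Set.Ioi 0 := by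
      rintro s ⟨hs, hs'⟩
      have hs0 : (0:ℝ) < s := hs
      refine ⟨?_, hs⟩
      simp only [Function.mem_support]
      intro habs
      rcases mul_eq_zero.mp habs with h | h
      · exact (exp_pos _).ne' h
      · have heqc : (s + x)⁻¹ = c := by
          have := pow_eq_zero_iff (n := 2) (by norm_num) |>.mp h
          linarith [sub_eq_zero.mp this]
        apply hs'
        have hsx : c⁻¹ = s + x := by rw [← heqc, inv_inv]
        simp only [Set.mem_singleton_iff]
        linarith
    calc (0:ENNReal) < volume (Set.Ioi (0:ℝ) \ {c⁻¹ - x}) := by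
          rw [measure_diff_null (measure_singleton _)]; simp
      _ ≤ _ := measure_mono hsub
  have hpos2 : 0 < ∫ s in Set.Ioi (0:ℝ), (Real.exp (-s) / (s + x) ^ 2
      - 2 * c * (Real.exp (-s) / (s + x)) + c ^ 2 * Real.exp (-s)) := by
    rwa [setIntegral_congr_fun measurableSet_Ioi heq]
  rw [integral_add hf (hint0.const_mul _), integral_sub hint2 (hint1.const_mul _),
    integral_const_mul, integral_const_mul, integral_sq hx, ← shift_eq, ← hc,
    integral_exp_neg_Ioi_zero] at hpos2
  nlinarith

lemma hasDerivAt_expIntE1 {x : ℝ} (hx : 0 < x) :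
    HasDerivAt expIntE1 (-(Real.exp (-x) / x)) x := by
  set a := x / 2 with ha
  have ha0 : 0 < a := by positivity
  have hax : a < x := by simp [ha]; linarith
  -- E₁ y = E₁ a − ∫ a..y for y > a
  have hsplit : ∀ y, a < y → expIntE1 y = expIntE1 a - ∫ t in a..y, Real.exp (-t) / t := by
    intro y hy
    have hunion : Set.Ioi a = Set.Ioc a y ∪ Set.Ioi y := (Set.Ioc_union_Ioi_eq_Ioi hy.le).symm
    have hdisj : Disjoint (Set.Ioc a y) (Set.Ioi y) := by
      rw [Set.disjoint_left]; intro t ht ht'; exact absurd ht.2 (not_le.mpr ht')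
    have hEa : expIntE1 a = (∫ t in Set.Ioc a y, Real.exp (-t) / t) + expIntE1 y := by
      unfold expIntE1
      rw [← setIntegral_union hdisj measurableSet_Ioi
        ((integrableOn_E1 ha0).mono_set Set.Ioc_subset_Ioi_self)
        ((integrableOn_E1 ha0).mono_set (Set.Ioi_subset_Ioi hy.le)), ← hunion]
    rw [intervalIntegral.integral_of_le hy.le]
    linarith [hEa]
  have hfc : ContinuousOn (fun t : ℝ => Real.exp (-t) / t) (Set.Ioi 0) :=
    ((continuous_exp.comp continuous_neg).continuousOn).div continuousOn_id
      (fun t ht => ne_of_gt ht)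
  have hFTC : HasDerivAt (fun y => expIntE1 a - ∫ t in a..y, Real.exp (-t) / t)
      (-(Real.exp (-x) / x)) x := by
    have hii : IntervalIntegrable (fun t : ℝ => Real.exp (-t) / t) volume a x := by
      rw [intervalIntegrable_iff_integrableOn_Ioc_of_le hax.le]
      exact (integrableOn_E1 ha0).mono_set Set.Ioc_subset_Ioi_self
    have hmeas : StronglyMeasurableAtFilter (fun t : ℝ => Real.exp (-t) / t) (nhds x) :=
      hfc.stronglyMeasurableAtFilter isOpen_Ioi _ hx
    have hct : ContinuousAt (fun t : ℝ => Real.exp (-t) / t) x :=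
      hfc.continuousAt (Ioi_mem_nhds hx)
    exact (intervalIntegral.integral_hasDerivAt_right hii hmeas hct).const_sub _
  refine hFTC.congr_of_eventuallyEq ?_
  filter_upwards [Ioi_mem_nhds hax] with y hy
  exact hsplit y hy

lemma hasDerivAt_F {y : ℝ} (hy : 0 < y) :
    HasDerivAt (fun t => Real.exp t * expIntE1 t)
      (Real.exp y * expIntE1 y - 1 / y) y := by
  have h := (Real.hasDerivAt_exp y).mul (hasDerivAt_expIntE1 hy)
  refine h.congr_deriv ?_
  have hxy : Real.exp y * Real.exp (-y) = 1 := by rw [← Real.exp_add]; simp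
  rw [mul_neg, ← mul_div_assoc, hxy]
  ring

lemma phi_strictMono :
    StrictMonoOn (fun t => (Real.exp t * expIntE1 t)⁻¹ - t) (Set.Ioi 0) := by
  have hder : ∀ y ∈ Set.Ioi (0:ℝ),
      HasDerivAt (fun t => (Real.exp t * expIntE1 t)⁻¹ - t)
        (-(Real.exp y * expIntE1 y - 1 / y) / (Real.exp y * expIntE1 y) ^ 2 - 1) y := by
    intro y hy
    have hy0 : (0:ℝ) < y := hy
    have hFpos : 0 < Real.exp y * expIntE1 y := mul_pos (exp_pos y) (expIntE1_pos hy0)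
    exact ((hasDerivAt_F hy0).inv hFpos.ne').sub (hasDerivAt_id y)
  have hpos : ∀ y ∈ Set.Ioi (0:ℝ),
      0 < -(Real.exp y * expIntE1 y - 1 / y) / (Real.exp y * expIntE1 y) ^ 2 - 1 := by
    intro y hy
    have hy0 : (0:ℝ) < y := hy
    set F := Real.exp y * expIntE1 y with hF
    have hFpos : 0 < F := mul_pos (exp_pos y) (expIntE1_pos hy0)
    have hk := key_ineq hy0
    have hid : -(F - 1 / y) / F ^ 2 - 1 = (1 / y - F - F ^ 2) / F ^ 2 := by
      field_simp
      ring
    rw [hid]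
    have : 0 < 1 / y - F - F ^ 2 := by nlinarith
    positivity
  refine strictMonoOn_of_deriv_pos (convex_Ioi 0)
    (fun y hy => ((hder y hy).continuousAt).continuousWithinAt) ?_
  rw [interior_Ioi]
  intro y hy
  rw [(hder y hy).deriv]
  exact hpos y hy

lemma key_compare {u : ℝ} (hu : 0 < u) :
    u * (Real.exp u * expIntE1 u) * (Real.exp (2*u) * expIntE1 (2*u))
      + Real.exp (2*u) * expIntE1 (2*u) - Real.exp u * expIntE1 u < 0 := by
  have h2u : u < 2 * u := by linarith
  have hphi := phi_strictMono hu (by simp only [Set.mem_Ioi]; linarith) h2u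
  simp only at hphi
  set a := Real.exp u * expIntE1 u with ha
  set b := Real.exp (2*u) * expIntE1 (2*u) with hb
  have hapos : 0 < a := mul_pos (exp_pos u) (expIntE1_pos hu)
  have hbpos : 0 < b := mul_pos (exp_pos (2*u)) (expIntE1_pos (by linarith))
  -- hphi : a⁻¹ - u < b⁻¹ - 2*u, so a⁻¹ + u < b⁻¹
  have h1 : a⁻¹ + u < b⁻¹ := by linarith
  have h2 : (a⁻¹ + u) * (a * b) < b⁻¹ * (a * b) :=
    mul_lt_mul_of_pos_right h1 (mul_pos hapos hbpos)
  have h3 : (a⁻¹ + u) * (a * b) = b + u * a * b := by field_simp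
  have h4 : b⁻¹ * (a * b) = a := by field_simp
  rw [h3, h4] at h2
  linarith


end GainRatioAux

open GainRatioAux

/-- The throughput gain ratio
`g(Ω) = 2 − e^{2/Ω}E₁(2/Ω)/(e^{1/Ω}E₁(1/Ω))` of buffer-aided relaying with
adaptive link selection over conventional buffer-aided relaying for symmetric
Rayleigh links is strictly decreasing in the mean SNR `Ω` on `(0,∞)`. -/
theorem gain_ratio_strictAnti :
    StrictAntiOn
      (fun Ω : ℝ => 2 - Real.exp (2 / Ω) * expIntE1 (2 / Ω)
          / (Real.exp (1 / Ω) * expIntE1 (1 / Ω)))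
      (Set.Ioi 0) := by
  have hasD : ∀ Ω : ℝ, 0 < Ω →
      HasDerivAt (fun Ω : ℝ => 2 - Real.exp (2 / Ω) * expIntE1 (2 / Ω)
          / (Real.exp (1 / Ω) * expIntE1 (1 / Ω)))
        (-(((Real.exp (2 / Ω) * expIntE1 (2 / Ω) - Ω / 2) * (-2 / Ω ^ 2)
              * (Real.exp (1 / Ω) * expIntE1 (1 / Ω))
            - Real.exp (2 / Ω) * expIntE1 (2 / Ω)
              * ((Real.exp (1 / Ω) * expIntE1 (1 / Ω) - Ω) * (-1 / Ω ^ 2)))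
          / (Real.exp (1 / Ω) * expIntE1 (1 / Ω)) ^ 2)) Ω := by
    intro Ω hΩ
    have hu1 : (0:ℝ) < 1 / Ω := by positivity
    have hu2 : (0:ℝ) < 2 / Ω := by positivity
    have hinv : HasDerivAt (fun Ω : ℝ => Ω⁻¹) (-(Ω^2)⁻¹) Ω := hasDerivAt_inv hΩ.ne'
    have h1u : HasDerivAt (fun Ω : ℝ => 1 / Ω) (-1 / Ω ^ 2) Ω := by
      simpa [one_div, neg_div] using hinv
    have h2u : HasDerivAt (fun Ω : ℝ => 2 / Ω) (-2 / Ω ^ 2) Ω := by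
      have := hinv.const_mul (2:ℝ)
      have he : -2 / Ω ^ 2 = 2 * -(Ω ^ 2)⁻¹ := by field_simp
      rw [he]
      simpa [div_eq_mul_inv] using this
    have hF2 : HasDerivAt (fun Ω : ℝ => Real.exp (2 / Ω) * expIntE1 (2 / Ω))
        ((Real.exp (2 / Ω) * expIntE1 (2 / Ω) - Ω / 2) * (-2 / Ω ^ 2)) Ω := by
      have := (hasDerivAt_F hu2).comp Ω h2u
      refine this.congr_deriv ?_
      rw [one_div_div]
    have hF1 : HasDerivAt (fun Ω : ℝ => Real.exp (1 / Ω) * expIntE1 (1 / Ω))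
        ((Real.exp (1 / Ω) * expIntE1 (1 / Ω) - Ω) * (-1 / Ω ^ 2)) Ω := by
      have := (hasDerivAt_F hu1).comp Ω h1u
      refine this.congr_deriv ?_
      rw [one_div_one_div]
    have hBpos : 0 < Real.exp (1 / Ω) * expIntE1 (1 / Ω) :=
      mul_pos (exp_pos _) (expIntE1_pos hu1)
    exact (hF2.div hF1 hBpos.ne').const_sub 2
  have hderiv_neg : ∀ Ω : ℝ, 0 < Ω →
      (-(((Real.exp (2 / Ω) * expIntE1 (2 / Ω) - Ω / 2) * (-2 / Ω ^ 2)
              * (Real.exp (1 / Ω) * expIntE1 (1 / Ω))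
            - Real.exp (2 / Ω) * expIntE1 (2 / Ω)
              * ((Real.exp (1 / Ω) * expIntE1 (1 / Ω) - Ω) * (-1 / Ω ^ 2)))
          / (Real.exp (1 / Ω) * expIntE1 (1 / Ω)) ^ 2)) < 0 := by
    intro Ω hΩ
    have hu1 : (0:ℝ) < 1 / Ω := by positivity
    set a := Real.exp (1 / Ω) * expIntE1 (1 / Ω) with ha
    set b := Real.exp (2 / Ω) * expIntE1 (2 / Ω) with hb
    have hapos : 0 < a := mul_pos (exp_pos _) (expIntE1_pos hu1)
    have hbpos : 0 < b := mul_pos (exp_pos _) (expIntE1_pos (by positivity))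
    have hkey : (1/Ω) * a * b + b - a < 0 := by
      have h := key_compare hu1
      have h2 : 2 * (1/Ω) = 2 / Ω := by ring
      rw [h2] at h
      exact h
    have hab : a * b + Ω * (b - a) < 0 := by
      have hm := mul_lt_mul_of_pos_left hkey hΩ
      have hΩne : Ω ≠ 0 := hΩ.ne'
      have : Ω * ((1/Ω) * a * b + b - a) = a * b + Ω * (b - a) := by
        field_simp
        ring
      rw [this] at hm
      simpa using hm
    have hN : 0 < (b - Ω / 2) * (-2 / Ω ^ 2) * a - b * ((a - Ω) * (-1 / Ω ^ 2)) := by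
      have hid : (b - Ω / 2) * (-2 / Ω ^ 2) * a - b * ((a - Ω) * (-1 / Ω ^ 2))
          = (1 / Ω ^ 2) * (-(a * b + Ω * (b - a))) := by
        field_simp
        ring
      rw [hid]
      have h1 : (0:ℝ) < 1 / Ω ^ 2 := by positivity
      have h2 : 0 < -(a * b + Ω * (b - a)) := by linarith
      exact mul_pos h1 h2
    have : 0 < ((b - Ω / 2) * (-2 / Ω ^ 2) * a - b * ((a - Ω) * (-1 / Ω ^ 2))) / a ^ 2 :=
      div_pos hN (pow_pos hapos 2)
    linarith
  refine strictAntiOn_of_deriv_neg (convex_Ioi 0)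
    (fun Ω hΩ => ((hasD Ω hΩ).continuousAt).continuousWithinAt) ?_
  rw [interior_Ioi]
  intro Ω hΩ
  rw [(hasD Ω hΩ).deriv]
  exact hderiv_neg Ω hΩ
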